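/- Let M be an a×b matrix over F_p and let Γ be a (k+1)×a matrix whose entries are independent uniform random elements of F_p. Then with probability at least 1 - (k+1)/p, rank(ΓM) = min(k+1, rank M). -/

import Mathlib

open Module Submodule

variable {F : Type*} [Field F] {V : Type*} [AddCommGroup V] [Module F V] [FiniteDimensional F V]

lemma aux_finrank_span_insert {s : Set V} {x : V} (hx : x ∉ span F s) :
    finrank F (span F (insert x s)) = finrank F (span F s) + 1 := by
  have hx0 : x ≠ 0 := fun h => hx (h ▸ (span F s).zero_mem)
  have hinf : (F ∙ x) ⊓ span F s = ⊥ := by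
    rw [Submodule.eq_bot_iff]
    rintro y ⟨hy1, hy2⟩
    rcases mem_span_singleton.mp hy1 with ⟨c, rfl⟩
    rcases eq_or_ne c 0 with rfl | hc
    · simp
    · exfalso
      apply hx
      have := (span F s).smul_mem c⁻¹ hy2
      rwa [smul_smul, inv_mul_cancel₀ hc, one_smul] at this
  have hsum := Submodule.finrank_sup_add_finrank_inf_eq (F ∙ x) (span F s)
  rw [hinf, finrank_bot, finrank_span_singleton hx0] at hsum
  rw [Submodule.span_insert]
  omega

lemma aux_span_seq (v : ℕ → V) (T : Submodule F V) :
    ∀ n : ℕ, (∀ i < n, v i ∈ T) →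
    (∀ i < n, v i ∉ span F (v '' Set.Iio i) ∨ span F (v '' Set.Iio i) = T) →
    finrank F (span F (v '' Set.Iio n)) = min n (finrank F T) := by
  intro n
  induction n with
  | zero =>
    intro _ _
    rw [show Set.Iio (0:ℕ) = ∅ by ext m; simp]
    simp
  | succ n ih =>
    intro hmem hstep
    have hd := ih (fun i hi => hmem i (by omega)) (fun i hi => hstep i (by omega))
    have himg : v '' Set.Iio (n + 1) = insert (v n) (v '' Set.Iio n) := by
      rw [show Set.Iio (n + 1) = insert n (Set.Iio n) by
        ext m; simp only [Set.mem_Iio, Set.mem_insert_iff]; omega, Set.image_insert_eq]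
    rcases hstep n (by omega) with h | h
    · have hins : span F (insert (v n) (v '' Set.Iio n)) ≤ T := by
        apply span_le.mpr
        rintro y hy
        rcases Set.mem_insert_iff.mp hy with rfl | ⟨i, hi, rfl⟩
        · exact hmem n (by omega)
        · exact hmem i (Nat.lt_succ_of_lt hi)
      have hfr := Submodule.finrank_mono hins
      rw [aux_finrank_span_insert h, hd] at hfr
      rw [himg, aux_finrank_span_insert h, hd]
      omega
    · have hvn : v n ∈ span F (v '' Set.Iio n) := h ▸ hmem n (by omega)
      rw [himg, Submodule.span_insert_eq_span hvn, hd]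
      rw [h] at hd
      omega

open Classical in
theorem stmt4 {p : ℕ} [Fact p.Prime] {a b k : ℕ}
    (M : Matrix (Fin a) (Fin b) (ZMod p)) :
    ((1 : ℝ) - (k + 1) / p) * Fintype.card (Matrix (Fin (k + 1)) (Fin a) (ZMod p)) ≤
      Fintype.card {Γ : Matrix (Fin (k + 1)) (Fin a) (ZMod p) //
        (Γ * M).rank = min (k + 1) M.rank} := by
  have hp : 0 < p := (Fact.out : p.Prime).pos
  have hp1 : 1 < p := (Fact.out : p.Prime).one_lt
  rcases Nat.eq_zero_or_pos a with rfl | ha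
  · -- trivial case a = 0
    have hM : M.rank = 0 := le_antisymm (by simpa using M.rank_le_card_height) (Nat.zero_le _)
    have hall : ∀ Γ : Matrix (Fin (k + 1)) (Fin 0) (ZMod p),
        (Γ * M).rank = min (k + 1) M.rank := by
      intro Γ
      have h0 : (Γ * M).rank = 0 :=
        le_antisymm (le_trans (Matrix.rank_mul_le_right Γ M) (le_of_eq hM)) (Nat.zero_le _)
      simp [h0, hM]
    have hcard : Fintype.card {Γ : Matrix (Fin (k + 1)) (Fin 0) (ZMod p) //
        (Γ * M).rank = min (k + 1) M.rank}
        = Fintype.card (Matrix (Fin (k + 1)) (Fin 0) (ZMod p)) :=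
      Fintype.card_congr (Equiv.subtypeUnivEquiv hall)
    rw [hcard]
    have hN : (0:ℝ) ≤ (Fintype.card (Matrix (Fin (k + 1)) (Fin 0) (ZMod p)) : ℝ) := by positivity
    nlinarith [div_nonneg (by positivity : (0:ℝ) ≤ ((k:ℝ)+1)) (by positivity : (0:ℝ) ≤ (p:ℝ))]
  · have hp : 0 < p := (Fact.out : p.Prime).pos
    set f := M.vecMulLinear with hf
    set T : Submodule (ZMod p) (Fin b → ZMod p) := span (ZMod p) (Set.range M) with hT
    have hTr : finrank (ZMod p) T = M.rank := (M.rank_eq_finrank_span_row).symm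
    have hTrange : LinearMap.range f = T := range_vecMulLinear M
    set w : Matrix (Fin (k + 1)) (Fin a) (ZMod p) → ℕ → (Fin b → ZMod p) :=
      fun Γ i => if h : i < k + 1 then f (Γ ⟨i, h⟩) else 0 with hw
    set Q : Fin (k + 1) → Matrix (Fin (k + 1)) (Fin a) (ZMod p) → Prop :=
      fun i Γ => w Γ i ∈ span (ZMod p) (w Γ '' Set.Iio (i : ℕ)) ∧
        span (ZMod p) (w Γ '' Set.Iio (i : ℕ)) ≠ T with hQ
    -- good Γ have the right rank
    have hgood : ∀ Γ : Matrix (Fin (k + 1)) (Fin a) (ZMod p),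
        (¬ ∃ i, Q i Γ) → (Γ * M).rank = min (k + 1) M.rank := by
      intro Γ h
      push_neg at h
      have hrange : Set.range (Γ * M) = w Γ '' Set.Iio (k + 1) := by
        ext y
        constructor
        · rintro ⟨i, rfl⟩
          exact ⟨(i : ℕ), i.isLt, by simp [hw, hf, Matrix.mul_apply_eq_vecMul]; intro h; have := i.isLt; omega⟩
        · rintro ⟨m, hm, rfl⟩
          have hm2 : m < k + 1 := hm
          exact ⟨⟨m, hm2⟩, by simp [hw, hf, hm2, Matrix.mul_apply_eq_vecMul]; intro h; omega⟩
      rw [Matrix.rank_eq_finrank_span_row]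
      change finrank (ZMod p) (span (ZMod p) (Set.range (Γ * M))) = _
      rw [hrange, ← hTr]
      apply aux_span_seq
      · intro i hi
        simp only [hw, dif_pos hi]
        rw [← hTrange]
        exact ⟨Γ ⟨i, hi⟩, rfl⟩
      · intro i hi
        by_cases hmem : w Γ i ∈ span (ZMod p) (w Γ '' Set.Iio i)
        · right
          have h2 := h ⟨i, hi⟩
          simp only [hQ] at h2
          push_neg at h2
          exact h2 hmem
        · left; exact hmem
    -- counting the bad events
    have hQcard : ∀ i : Fin (k + 1), Fintype.card {Γ : Matrix (Fin (k + 1)) (Fin a) (ZMod p) // Q i Γ}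
        ≤ p ^ ((k + 1) * a - 1) := by
      intro i
      set ext0 : ({j : Fin (k + 1) // j ≠ i} → (Fin a → ZMod p)) → Matrix (Fin (k + 1)) (Fin a) (ZMod p) :=
        fun g j => if h : j = i then 0 else g ⟨j, h⟩ with hext
      set D : ({j : Fin (k + 1) // j ≠ i} → (Fin a → ZMod p)) → Submodule (ZMod p) (Fin a → ZMod p) :=
        fun g => if span (ZMod p) (w (ext0 g) '' Set.Iio (i : ℕ)) = T then ⊥
          else Submodule.comap f (span (ZMod p) (w (ext0 g) '' Set.Iio (i : ℕ))) with hD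
      have hwres : ∀ Γ : Matrix (Fin (k + 1)) (Fin a) (ZMod p),
          w (ext0 fun j : {j : Fin (k + 1) // j ≠ i} => Γ j) '' Set.Iio (i : ℕ)
            = w Γ '' Set.Iio (i : ℕ) := by
        intro Γ
        apply Set.image_congr
        intro m hm
        have hm' : m < (i : ℕ) := hm
        have hmk : m < k + 1 := lt_trans hm' i.isLt
        have hne : (⟨m, hmk⟩ : Fin (k + 1)) ≠ i := Fin.ne_of_val_ne (Nat.ne_of_lt hm')
        simp only [hw, dif_pos hmk, hext, dif_neg hne]
      -- D g is a proper submodule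
      haveI : Nontrivial (Fin a → ZMod p) := by
        haveI : Nonempty (Fin a) := ⟨⟨0, ha⟩⟩
        infer_instance
      have hDne : ∀ g, D g ≠ ⊤ := by
        intro g
        by_cases hS : span (ZMod p) (w (ext0 g) '' Set.Iio (i : ℕ)) = T
        · rw [hD]; simp only [if_pos hS]; exact bot_ne_top
        · rw [hD]; simp only [if_neg hS]
          intro htop
          apply hS
          apply le_antisymm
          · rw [span_le]
            rintro y ⟨m, hm, rfl⟩
            have hm' : m < (i : ℕ) := hm
            have hmk : m < k + 1 := lt_trans hm' i.isLt
            simp only [hw, dif_pos hmk]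
            rw [← hTrange]
            exact ⟨_, rfl⟩
          · rw [← hTrange]
            rintro y ⟨x, rfl⟩
            have hx : x ∈ Submodule.comap f (span (ZMod p) (w (ext0 g) '' Set.Iio (i : ℕ))) := by
              rw [htop]; trivial
            exact hx
      have hDcard : ∀ g, Fintype.card {x : Fin a → ZMod p // x ∈ D g} ≤ p ^ (a - 1) := by
        intro g
        have hlt : finrank (ZMod p) (D g) < a := by
          have h2 := Submodule.finrank_lt_finrank_of_lt (lt_top_iff_ne_top.mpr (hDne g))
          rwa [finrank_top, Module.finrank_fin_fun] at h2
        have hcd : Fintype.card {x : Fin a → ZMod p // x ∈ D g} = p ^ finrank (ZMod p) (D g) := by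
          rw [card_eq_pow_finrank (K := ZMod p) (V := D g), ZMod.card]
        rw [hcd]
        exact Nat.pow_le_pow_right hp (by omega)
      set Φ : {Γ : Matrix (Fin (k + 1)) (Fin a) (ZMod p) // Q i Γ} →
          Σ g : ({j : Fin (k + 1) // j ≠ i} → (Fin a → ZMod p)), {x : Fin a → ZMod p // x ∈ D g} :=
        fun Γ => ⟨fun j => Γ.1 j, ⟨Γ.1 i, by
          obtain ⟨hQ1, hQ2⟩ := Γ.2
          rw [hD]
          simp only [hwres Γ.1, if_neg hQ2]
          rw [Submodule.mem_comap]
          have : f (Γ.1 i) = w Γ.1 (i : ℕ) := by simp [hw]; intro h; have := i.isLt; omega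
          rw [this]
          exact hQ1⟩⟩ with hΦ
      have hΦinj : Function.Injective Φ := by
        rintro ⟨Γ, hΓ⟩ ⟨Γ', hΓ'⟩ h
        have h1 := congrArg Sigma.fst h
        have h2 := congrArg (fun s : (Σ g : ({j : Fin (k + 1) // j ≠ i} → (Fin a → ZMod p)),
          {x : Fin a → ZMod p // x ∈ D g}) => (s.2 : Fin a → ZMod p)) h
        simp only [hΦ] at h1 h2
        apply Subtype.ext
        funext j l
        by_cases hj : j = i
        · subst hj; exact congrFun h2 l
        · exact congrFun (congrFun h1 ⟨j, hj⟩) l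
      calc Fintype.card {Γ : Matrix (Fin (k + 1)) (Fin a) (ZMod p) // Q i Γ}
          ≤ Fintype.card (Σ g : ({j : Fin (k + 1) // j ≠ i} → (Fin a → ZMod p)),
              {x : Fin a → ZMod p // x ∈ D g}) := Fintype.card_le_of_injective Φ hΦinj
        _ = ∑ g : ({j : Fin (k + 1) // j ≠ i} → (Fin a → ZMod p)),
              Fintype.card {x : Fin a → ZMod p // x ∈ D g} := Fintype.card_sigma
        _ ≤ ∑ _g : ({j : Fin (k + 1) // j ≠ i} → (Fin a → ZMod p)), p ^ (a - 1) :=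
              Finset.sum_le_sum fun g _ => hDcard g
        _ = Fintype.card ({j : Fin (k + 1) // j ≠ i} → (Fin a → ZMod p)) * p ^ (a - 1) := by
              rw [Finset.sum_const, Finset.card_univ, smul_eq_mul]
        _ = p ^ (k * a) * p ^ (a - 1) := by
              rw [Fintype.card_fun, Fintype.card_fun, ZMod.card,
                Fintype.card_subtype_compl, Fintype.card_subtype_eq, Fintype.card_fin,
                ← pow_mul, Fintype.card_fin, Nat.add_sub_cancel]
              ring
        _ = p ^ ((k + 1) * a - 1) := by
              rw [← pow_add]
              congr 1
              have : (k + 1) * a = k * a + a := by ring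
              omega
    have hBad : Fintype.card {Γ : Matrix (Fin (k + 1)) (Fin a) (ZMod p) // ∃ i, Q i Γ}
        ≤ (k + 1) * p ^ ((k + 1) * a - 1) := by
      set Ψ : {Γ : Matrix (Fin (k + 1)) (Fin a) (ZMod p) // ∃ i, Q i Γ} →
          Σ i : Fin (k + 1), {Γ : Matrix (Fin (k + 1)) (Fin a) (ZMod p) // Q i Γ} :=
        fun Γ => ⟨Classical.choose Γ.2, Γ.1, Classical.choose_spec Γ.2⟩ with hΨ
      have hΨinj : Function.Injective Ψ := by
        rintro ⟨Γ, hΓ⟩ ⟨Γ', hΓ'⟩ h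
        have h2 := congrArg (fun s : (Σ i : Fin (k + 1),
          {Γ : Matrix (Fin (k + 1)) (Fin a) (ZMod p) // Q i Γ}) =>
            (s.2 : Matrix (Fin (k + 1)) (Fin a) (ZMod p))) h
        exact Subtype.ext h2
      calc Fintype.card {Γ : Matrix (Fin (k + 1)) (Fin a) (ZMod p) // ∃ i, Q i Γ}
          ≤ Fintype.card (Σ i : Fin (k + 1), {Γ : Matrix (Fin (k + 1)) (Fin a) (ZMod p) // Q i Γ}) :=
            Fintype.card_le_of_injective Ψ hΨinj
        _ = ∑ i : Fin (k + 1), Fintype.card {Γ : Matrix (Fin (k + 1)) (Fin a) (ZMod p) // Q i Γ} :=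
            Fintype.card_sigma
        _ ≤ ∑ _i : Fin (k + 1), p ^ ((k + 1) * a - 1) := Finset.sum_le_sum fun i _ => hQcard i
        _ = (k + 1) * p ^ ((k + 1) * a - 1) := by
            rw [Finset.sum_const, Finset.card_univ, Fintype.card_fin, smul_eq_mul]
    have hcompl : Fintype.card {Γ : Matrix (Fin (k + 1)) (Fin a) (ZMod p) // ¬ ∃ i, Q i Γ}
        = Fintype.card (Matrix (Fin (k + 1)) (Fin a) (ZMod p))
          - Fintype.card {Γ : Matrix (Fin (k + 1)) (Fin a) (ZMod p) // ∃ i, Q i Γ} :=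
      Fintype.card_subtype_compl _
    have hmono : Fintype.card {Γ : Matrix (Fin (k + 1)) (Fin a) (ZMod p) // ¬ ∃ i, Q i Γ}
        ≤ Fintype.card {Γ : Matrix (Fin (k + 1)) (Fin a) (ZMod p) //
            (Γ * M).rank = min (k + 1) M.rank} :=
      Fintype.card_subtype_mono _ _ hgood
    have hΩ : Fintype.card (Matrix (Fin (k + 1)) (Fin a) (ZMod p)) = p ^ ((k + 1) * a) := by
      rw [show Fintype.card (Matrix (Fin (k + 1)) (Fin a) (ZMod p))
          = Fintype.card (Fin (k + 1) → Fin a → ZMod p) from rfl,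
        Fintype.card_fun, Fintype.card_fun, ZMod.card, Fintype.card_fin, Fintype.card_fin,
        ← pow_mul]
      ring_nf
    have hkey : Fintype.card (Matrix (Fin (k + 1)) (Fin a) (ZMod p))
        ≤ Fintype.card {Γ : Matrix (Fin (k + 1)) (Fin a) (ZMod p) //
            (Γ * M).rank = min (k + 1) M.rank} + (k + 1) * p ^ ((k + 1) * a - 1) := by omega
    rw [hΩ] at hkey
    have hGR : ((p:ℝ)) ^ ((k + 1) * a) ≤
        (Fintype.card {Γ : Matrix (Fin (k + 1)) (Fin a) (ZMod p) //
            (Γ * M).rank = min (k + 1) M.rank} : ℝ)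
          + ((k:ℝ) + 1) * (p:ℝ) ^ ((k + 1) * a - 1) := by
      exact_mod_cast hkey
    rw [hΩ]
    push_cast
    have hc1 : 1 ≤ (k + 1) * a := le_trans ha (Nat.le_mul_of_pos_left a (Nat.succ_pos k))
    have hpR : (0:ℝ) < p := by exact_mod_cast hp
    have hpow : (p:ℝ) ^ ((k + 1) * a) = (p:ℝ) ^ ((k + 1) * a - 1) * p := by
      rw [← pow_succ]
      congr 1
      omega
    have heq : ((1:ℝ) - ((k:ℝ) + 1) / p) * (p:ℝ) ^ ((k + 1) * a)
        = (p:ℝ) ^ ((k + 1) * a) - ((k:ℝ) + 1) * (p:ℝ) ^ ((k + 1) * a - 1) := by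
      rw [sub_mul, hpow]
      field_simp
    rw [heq]
    linarith [hGR]
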